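/- arXiv:2002.05001 — 2 statements merged into one kernel-verified Lean document; each statement's English description precedes it below -/
import Mathlib

section
/- Let A₀ = V₀Λ₀W₀ᴴ with W₀ᴴV₀ = I, Λ₀ diagonal with distinct eigenvalues, and let Λ₁ = Diag(W₀ᴴA₁V₀). Then V₁ := −V₀ (Π^{†∘} ∘ (W₀ᴴA₁V₀)) solves the Sylvester equation A₀V₁ − V₁Λ₀ = V₀Λ₁ − A₁V₀, where Π^{†∘} has entries 1/(λᵢ − λⱼ) for i ≠ j and 0 on the diagonal. -/
open Matrix

theorem stmt_10 {n : ℕ} (V₀ W₀ A₁ : Matrix (Fin n) (Fin n) ℂ) (l : Fin n → ℂ)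
    (hWV : W₀ᴴ * V₀ = 1) (hl : Function.Injective l)
    (Λ₀ A₀ Λ₁ Pid V₁ : Matrix (Fin n) (Fin n) ℂ)
    (hΛ₀ : Λ₀ = Matrix.diagonal l)
    (hA₀ : A₀ = V₀ * Λ₀ * W₀ᴴ)
    (hΛ₁ : Λ₁ = Matrix.diagonal (fun i => (W₀ᴴ * A₁ * V₀) i i))
    (hPi : Pid = Matrix.of fun i j => if i = j then 0 else (l i - l j)⁻¹)
    (hV₁ : V₁ = -(V₀ * Matrix.hadamard Pid (W₀ᴴ * A₁ * V₀))) :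
    A₀ * V₁ - V₁ * Λ₀ = V₀ * Λ₁ - A₁ * V₀ := by
  set M : Matrix (Fin n) (Fin n) ℂ := W₀ᴴ * A₁ * V₀ with hM
  set H : Matrix (Fin n) (Fin n) ℂ := Matrix.hadamard Pid M with hH
  have hVW : V₀ * W₀ᴴ = 1 := mul_eq_one_comm.mp hWV
  have hA₁V : V₀ * M = A₁ * V₀ := by
    calc V₀ * M = (V₀ * W₀ᴴ) * A₁ * V₀ := by rw [hM]; noncomm_ring
    _ = A₁ * V₀ := by rw [hVW, one_mul]
  have key : H * Λ₀ - Λ₀ * H = Λ₁ - M := by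
    ext i j
    simp only [Matrix.sub_apply, hΛ₀, Matrix.mul_diagonal, Matrix.diagonal_mul, hΛ₁,
      Matrix.diagonal_apply, hH, Matrix.hadamard_apply, hPi, Matrix.of_apply]
    by_cases hij : i = j
    · subst hij; simp
    · have hne : l i - l j ≠ 0 := sub_ne_zero.mpr (fun h => hij (hl h))
      simp only [if_neg hij]
      field_simp
      ring
  have hA₀V₁ : A₀ * V₁ = -(V₀ * Λ₀ * H) := by
    rw [hA₀, hV₁]
    calc V₀ * Λ₀ * W₀ᴴ * -(V₀ * H) = -(V₀ * Λ₀ * (W₀ᴴ * V₀) * H) := by noncomm_ring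
    _ = -(V₀ * Λ₀ * H) := by rw [hWV, mul_one]
  have hV₁Λ₀ : V₁ * Λ₀ = -(V₀ * (H * Λ₀)) := by rw [hV₁]; noncomm_ring
  rw [hA₀V₁, hV₁Λ₀, ← hA₁V]
  calc -(V₀ * Λ₀ * H) - -(V₀ * (H * Λ₀)) = V₀ * (H * Λ₀ - Λ₀ * H) := by noncomm_ring
  _ = V₀ * (Λ₁ - M) := by rw [key]
  _ = V₀ * Λ₁ - V₀ * M := by noncomm_ring
end

section
/- With the same setup, W₁ᴴ := (Π^{†∘} ∘ (W₀ᴴA₁V₀)) W₀ᴴ solves the left Sylvester equation W₁ᴴA₀ − Λ₀W₁ᴴ = Λ₁W₀ᴴ − W₀ᴴA₁. -/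
open Matrix

theorem stmt_11 {n : ℕ} (V₀ W₀ A₁ : Matrix (Fin n) (Fin n) ℂ) (l : Fin n → ℂ)
    (hWV : W₀ᴴ * V₀ = 1) (hl : Function.Injective l)
    (Λ₀ A₀ Λ₁ Pid Y : Matrix (Fin n) (Fin n) ℂ)
    (hΛ₀ : Λ₀ = Matrix.diagonal l)
    (hA₀ : A₀ = V₀ * Λ₀ * W₀ᴴ)
    (hΛ₁ : Λ₁ = Matrix.diagonal (fun i => (W₀ᴴ * A₁ * V₀) i i))
    (hPi : Pid = Matrix.of fun i j => if i = j then 0 else (l i - l j)⁻¹)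
    (hY : Y = Matrix.hadamard Pid (W₀ᴴ * A₁ * V₀) * W₀ᴴ) :
    Y * A₀ - Λ₀ * Y = Λ₁ * W₀ᴴ - W₀ᴴ * A₁ := by
  subst hΛ₀ hA₀ hΛ₁ hPi hY
  have hVW : V₀ * W₀ᴴ = 1 := mul_eq_one_comm.mp hWV
  set M := W₀ᴴ * A₁ * V₀ with hM
  set H := Matrix.hadamard
    (Matrix.of fun i j => if i = j then 0 else (l i - l j)⁻¹) M with hH
  have key : H * Matrix.diagonal l - Matrix.diagonal l * H
      = Matrix.diagonal (fun i => M i i) - M := by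
    ext i j
    by_cases h : i = j
    · subst h
      simp [Matrix.mul_diagonal, Matrix.diagonal_mul, hH, Matrix.hadamard_apply]
    · have hne : l i - l j ≠ 0 := sub_ne_zero.mpr (fun hc => h (hl hc))
      simp only [Matrix.sub_apply, Matrix.mul_diagonal, Matrix.diagonal_mul, hH,
        Matrix.hadamard_apply, Matrix.of_apply, if_neg h,
        Matrix.diagonal_apply_ne _ h]
      field_simp
      ring
  have h1 : H * W₀ᴴ * (V₀ * Matrix.diagonal l * W₀ᴴ)
      = H * Matrix.diagonal l * W₀ᴴ := by
    calc H * W₀ᴴ * (V₀ * Matrix.diagonal l * W₀ᴴ)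
        = H * (W₀ᴴ * V₀) * Matrix.diagonal l * W₀ᴴ := by
          simp only [Matrix.mul_assoc]
      _ = H * Matrix.diagonal l * W₀ᴴ := by rw [hWV, Matrix.mul_one]
  have h2 : W₀ᴴ * A₁ = M * W₀ᴴ := by
    rw [hM]
    calc W₀ᴴ * A₁ = W₀ᴴ * A₁ * (V₀ * W₀ᴴ) := by rw [hVW, Matrix.mul_one]
      _ = W₀ᴴ * A₁ * V₀ * W₀ᴴ := by simp only [Matrix.mul_assoc]
  rw [h1, h2, ← Matrix.mul_assoc (Matrix.diagonal l), ← Matrix.sub_mul,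
    ← Matrix.sub_mul, key]
end
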